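/- Let f ∈ C²([0,1]^d) with ‖f‖_{C²} := max(‖f‖_∞, max_{|α|=2} ‖∂^α f‖_∞). Then for every n ≥ 1, ‖f - B_n(f)‖_∞ ≤ d²‖f‖_{C²}/(4n), where B_n(f)(x) = ∑_{0 ≤ k ≤ n} f(k/n) ∏_{j=1}^d p_{n,k_j}(x_j). -/

import Mathlib

open Finset

/-- The Bernstein polynomial `p_{n,k}(x) = C(n,k) x^k (1-x)^{n-k}`. -/
noncomputable def bern (n k : ℕ) (x : ℝ) : ℝ :=
  (n.choose k : ℝ) * x ^ k * (1 - x) ^ (n - k)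

/-- The multivariate Bernstein polynomial of a function `f : [0,1]^d → ℝ`. -/
noncomputable def bernOp (d n : ℕ) (f : (Fin d → ℝ) → ℝ) (x : Fin d → ℝ) : ℝ :=
  ∑ k : Fin d → Fin (n + 1),
    f (fun j => ((k j : ℕ) : ℝ) / n) * ∏ j, bern n (k j) (x j)

/-- The second partial derivative `∂_i ∂_j f` evaluated at `x`. -/
noncomputable def secondPartial (d : ℕ) (f : (Fin d → ℝ) → ℝ) (i j : Fin d)
    (x : Fin d → ℝ) : ℝ :=
  iteratedFDeriv ℝ 2 f x ![Pi.single i 1, Pi.single j 1]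

/-! ### Univariate Bernstein identities -/

lemma bern_eval (n k : ℕ) (x : ℝ) : (bernsteinPolynomial ℝ n k).eval x = bern n k x := by
  simp [bernsteinPolynomial, bern, mul_comm]

lemma bern_nonneg {n k : ℕ} {x : ℝ} (hx : x ∈ Set.Icc (0:ℝ) 1) : 0 ≤ bern n k x := by
  obtain ⟨h0, h1⟩ := hx
  have h2 : (0:ℝ) ≤ 1 - x := by linarith
  exact mul_nonneg (mul_nonneg (by positivity) (by positivity)) (by positivity)

lemma bern_sum (n : ℕ) (x : ℝ) : ∑ k : Fin (n+1), bern n (k : ℕ) x = 1 := by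
  have := congrArg (Polynomial.eval x) (bernsteinPolynomial.sum ℝ n)
  rw [Fin.sum_univ_eq_sum_range (fun k => bern n k x)]
  simpa [Polynomial.eval_finset_sum, bern_eval] using this

lemma bern_sum_smul (n : ℕ) (x : ℝ) :
    ∑ k : Fin (n+1), ((k : ℕ) : ℝ) * bern n (k : ℕ) x = n * x := by
  have := congrArg (Polynomial.eval x) (bernsteinPolynomial.sum_smul ℝ n)
  rw [Fin.sum_univ_eq_sum_range (fun k => (k : ℝ) * bern n k x)]
  simpa [Polynomial.eval_finset_sum, bern_eval, mul_comm] using this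

lemma bern_variance (n : ℕ) (x : ℝ) :
    ∑ k : Fin (n+1), (n * x - ((k:ℕ):ℝ))^2 * bern n (k : ℕ) x = n * x * (1 - x) := by
  have := congrArg (Polynomial.eval x) (bernsteinPolynomial.variance ℝ n)
  rw [Fin.sum_univ_eq_sum_range (fun k => (n * x - (k:ℝ))^2 * bern n k x)]
  simpa [Polynomial.eval_finset_sum, bern_eval] using this

lemma bern_center {n : ℕ} (hn : 1 ≤ n) (x : ℝ) :
    ∑ t : Fin (n+1), (((t:ℕ):ℝ)/n - x) * bern n (t:ℕ) x = 0 := by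
  have hn' : (n:ℝ) ≠ 0 := Nat.cast_ne_zero.mpr (by omega)
  have h : ∀ t : Fin (n+1), (((t:ℕ):ℝ)/n - x) * bern n (t:ℕ) x
      = (1/n) * (((t:ℕ):ℝ) * bern n (t:ℕ) x) - x * bern n (t:ℕ) x := by
    intro t; field_simp
  rw [Finset.sum_congr rfl fun t _ => h t, Finset.sum_sub_distrib, ← Finset.mul_sum,
    ← Finset.mul_sum, bern_sum_smul, bern_sum]
  field_simp; simp

lemma bern_var {n : ℕ} (hn : 1 ≤ n) (x : ℝ) :
    ∑ t : Fin (n+1), (((t:ℕ):ℝ)/n - x)^2 * bern n (t:ℕ) x = x * (1 - x) / n := by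
  have hn' : (n:ℝ) ≠ 0 := Nat.cast_ne_zero.mpr (by omega)
  have h : ∀ t : Fin (n+1), (((t:ℕ):ℝ)/n - x)^2 * bern n (t:ℕ) x
      = (1/(n:ℝ)^2) * (((n:ℝ) * x - ((t:ℕ):ℝ))^2 * bern n (t:ℕ) x) := by
    intro t
    have e1 : ((t:ℕ):ℝ)/n - x = ((n:ℝ)*x - ((t:ℕ):ℝ)) * (-(1/n)) := by
      field_simp; ring
    rw [e1]
    have e2 : (-(1/(n:ℝ)))^2 = 1/(n:ℝ)^2 := by rw [neg_pow]; simp [div_pow]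
    rw [mul_pow, e2]; ring
  rw [Finset.sum_congr rfl fun t _ => h t, ← Finset.mul_sum, bern_variance]
  field_simp

/-! ### Multivariate sum lemmas -/

lemma sum_prod_eq {d n : ℕ} (g : Fin d → Fin (n+1) → ℝ) :
    ∑ k : Fin d → Fin (n+1), ∏ j, g j (k j) = ∏ j, ∑ t, g j t :=
  (Fintype.prod_sum g).symm

lemma weighted_sum {d n : ℕ} (x : Fin d → ℝ) (i : Fin d) (c : Fin (n+1) → ℝ) :
    ∑ k : Fin d → Fin (n+1), c (k i) * ∏ j, bern n (k j) (x j)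
      = ∑ t, c t * bern n (t : ℕ) (x i) := by
  classical
  have hterm : ∀ k : Fin d → Fin (n+1), c (k i) * ∏ j, bern n (k j) (x j)
      = ∏ j, (if j = i then c (k j) * bern n (k j) (x j) else bern n (k j) (x j)) := by
    intro k
    have h1 : ∀ j : Fin d, (if j = i then c (k j) * bern n (k j) (x j) else bern n (k j) (x j))
        = bern n (k j) (x j) * (if j = i then c (k j) else 1) := by
      intro j; split <;> ring
    rw [Finset.prod_congr rfl fun j _ => h1 j, Finset.prod_mul_distrib,
      Finset.prod_ite_eq' univ i (fun j => c (k j))]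
    simp [mul_comm]
  rw [Finset.sum_congr rfl fun k _ => hterm k,
    sum_prod_eq (fun j t => if j = i then c t * bern n t (x j) else bern n t (x j))]
  rw [Finset.prod_eq_single i (fun j _ hj => by
      simp only [if_neg hj]; exact bern_sum n (x j))
    (fun h => absurd (mem_univ i) h)]
  simp

/-! ### Calculus helpers -/

lemma quad_bound {g : ℝ → ℝ} {C : ℝ} (hg1 : Differentiable ℝ g)
    (hg2 : Differentiable ℝ (deriv g))
    (hC : ∀ t ∈ Set.Icc (0:ℝ) 1, |deriv (deriv g) t| ≤ C) :
    |g 1 - g 0 - deriv g 0| ≤ C := by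
  have hC0 : 0 ≤ C := le_trans (abs_nonneg _) (hC 0 (by norm_num))
  have stepA : ∀ t ∈ Set.Icc (0:ℝ) 1, |deriv g t - deriv g 0| ≤ C := by
    intro t ht
    have := Convex.norm_image_sub_le_of_norm_hasDerivWithin_le
      (f := deriv g) (f' := deriv (deriv g)) (s := Set.Icc (0:ℝ) 1)
      (fun u _ => (hg2 u).hasDerivAt.hasDerivWithinAt)
      (fun u hu => hC u hu) (convex_Icc 0 1)
      (Set.mem_Icc.mpr ⟨le_refl 0, zero_le_one⟩) ht
    calc |deriv g t - deriv g 0| ≤ C * ‖t - (0:ℝ)‖ := this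
      _ ≤ C * 1 := by
          apply mul_le_mul_of_nonneg_left _ hC0
          rw [sub_zero, Real.norm_eq_abs, abs_of_nonneg ht.1]; exact ht.2
      _ = C := mul_one C
  have hφ : ∀ t : ℝ, HasDerivAt (fun s => g s - g 0 - s * deriv g 0)
      (deriv g t - deriv g 0) t := by
    intro t
    exact (((hg1 t).hasDerivAt.sub_const (g 0)).sub (hasDerivAt_mul_const (deriv g 0)))
  have := Convex.norm_image_sub_le_of_norm_hasDerivWithin_le
      (f := fun s => g s - g 0 - s * deriv g 0) (f' := fun t => deriv g t - deriv g 0)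
      (s := Set.Icc (0:ℝ) 1)
      (fun u _ => (hφ u).hasDerivWithinAt)
      (fun u hu => stepA u hu) (convex_Icc 0 1)
      (Set.mem_Icc.mpr ⟨le_refl 0, zero_le_one⟩) (Set.mem_Icc.mpr ⟨zero_le_one, le_refl 1⟩)
  simpa [Real.norm_eq_abs] using this

lemma line_hasDerivAt {d : ℕ} (x v : Fin d → ℝ) (t : ℝ) :
    HasDerivAt (fun t : ℝ => x + t • v) v t := by
  simpa using ((hasDerivAt_id t).smul_const v).const_add x

lemma g_hasDerivAt {d : ℕ} {f : (Fin d → ℝ) → ℝ} (hf : ContDiff ℝ 2 f)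
    (x v : Fin d → ℝ) (t : ℝ) :
    HasDerivAt (fun t : ℝ => f (x + t • v)) (fderiv ℝ f (x + t • v) v) t :=
  ((hf.differentiable (by norm_num) (x + t • v)).hasFDerivAt).comp_hasDerivAt t
    (line_hasDerivAt x v t)

lemma g'_hasDerivAt {d : ℕ} {f : (Fin d → ℝ) → ℝ} (hf : ContDiff ℝ 2 f)
    (x v : Fin d → ℝ) (t : ℝ) :
    HasDerivAt (fun t : ℝ => fderiv ℝ f (x + t • v) v)
      (fderiv ℝ (fderiv ℝ f) (x + t • v) v v) t := by
  have hF : ContDiff ℝ 1 (fderiv ℝ f) := hf.fderiv_right (by norm_num)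
  have h1 : HasDerivAt (fun t : ℝ => fderiv ℝ f (x + t • v))
      (fderiv ℝ (fderiv ℝ f) (x + t • v) v) t :=
    ((hF.differentiable (by norm_num) (x + t • v)).hasFDerivAt).comp_hasDerivAt t
      (line_hasDerivAt x v t)
  simpa using h1.clm_apply (hasDerivAt_const t v)

lemma pi_single_expand {d : ℕ} (v : Fin d → ℝ) :
    v = ∑ i, v i • (Pi.single i 1 : Fin d → ℝ) := by
  funext j
  rw [Finset.sum_apply]
  simp [Pi.single_apply]

lemma lin_expand {d : ℕ} (D : (Fin d → ℝ) →L[ℝ] ℝ) (v : Fin d → ℝ) :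
    D v = ∑ i, v i * D (Pi.single i 1) := by
  conv_lhs => rw [pi_single_expand v]
  rw [map_sum]
  exact Finset.sum_congr rfl fun i _ => by rw [map_smul]; simp

lemma bilin_expand {d : ℕ} (B : (Fin d → ℝ) →L[ℝ] ((Fin d → ℝ) →L[ℝ] ℝ)) (v : Fin d → ℝ) :
    B v v = ∑ i, ∑ j, v i * v j * (B (Pi.single i 1) (Pi.single j 1)) := by
  have h2 : ∀ j : Fin d, B v (Pi.single j 1) = ∑ i, v i * B (Pi.single i 1) (Pi.single j 1) := by
    intro j
    conv_lhs => rw [pi_single_expand v]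
    rw [map_sum, ContinuousLinearMap.sum_apply]
    exact Finset.sum_congr rfl fun i _ => by rw [map_smul]; simp
  calc B v v = ∑ j, v j * B v (Pi.single j 1) := lin_expand (B v) v
    _ = ∑ j, v j * ∑ i, v i * B (Pi.single i 1) (Pi.single j 1) :=
        Finset.sum_congr rfl fun j _ => by rw [h2]
    _ = ∑ i, ∑ j, v i * v j * (B (Pi.single i 1) (Pi.single j 1)) := by
        rw [Finset.sum_comm]
        exact Finset.sum_congr rfl fun j _ => by
          rw [Finset.mul_sum]
          exact Finset.sum_congr rfl fun i _ => by ring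

/-- Taylor remainder bound along a segment. -/
lemma taylor_bound {d : ℕ} {f : (Fin d → ℝ) → ℝ} (hf : ContDiff ℝ 2 f) {M : ℝ}
    (hM2 : ∀ x : Fin d → ℝ, (∀ j, x j ∈ Set.Icc (0 : ℝ) 1) →
      ∀ i j : Fin d, |secondPartial d f i j x| ≤ M)
    {x y : Fin d → ℝ} (hx : ∀ j, x j ∈ Set.Icc (0:ℝ) 1) (hy : ∀ j, y j ∈ Set.Icc (0:ℝ) 1) :
    |f y - f x - fderiv ℝ f x (y - x)| ≤ M * (∑ i, |y i - x i|)^2 := by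
  set v : Fin d → ℝ := y - x with hv
  set g : ℝ → ℝ := fun t => f (x + t • v) with hg
  have hg1 : Differentiable ℝ g := fun t => (g_hasDerivAt hf x v t).differentiableAt
  have hdg : deriv g = fun t => fderiv ℝ f (x + t • v) v :=
    funext fun t => (g_hasDerivAt hf x v t).deriv
  have hg2 : Differentiable ℝ (deriv g) := by
    rw [hdg]; exact fun t => (g'_hasDerivAt hf x v t).differentiableAt
  have hdd : ∀ t, deriv (deriv g) t = fderiv ℝ (fderiv ℝ f) (x + t • v) v v := by
    intro t; rw [hdg]; exact (g'_hasDerivAt hf x v t).deriv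
  have hmem : ∀ t ∈ Set.Icc (0:ℝ) 1, ∀ j, (x + t • v) j ∈ Set.Icc (0:ℝ) 1 := by
    intro t ht j
    have h1 := hx j; have h2 := hy j
    have he : (x + t • v) j = (1 - t) * x j + t * y j := by
      simp [hv, Pi.sub_apply]; ring
    rw [he]
    constructor
    · nlinarith [ht.1, ht.2, h1.1, h1.2, h2.1, h2.2]
    · nlinarith [ht.1, ht.2, h1.1, h1.2, h2.1, h2.2]
  have hbound : ∀ t ∈ Set.Icc (0:ℝ) 1, |deriv (deriv g) t| ≤ M * (∑ i, |v i|)^2 := by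
    intro t ht
    rw [hdd t, bilin_expand]
    have hone : ∀ i j : Fin d,
        |v i * v j * (fderiv ℝ (fderiv ℝ f) (x + t • v) (Pi.single i 1) (Pi.single j 1))|
          ≤ |v i| * |v j| * M := by
      intro i j
      rw [abs_mul, abs_mul]
      refine mul_le_mul_of_nonneg_left ?_ (by positivity)
      have hsp : fderiv ℝ (fderiv ℝ f) (x + t • v) (Pi.single i 1) (Pi.single j 1)
          = secondPartial d f i j (x + t • v) := by
        rw [secondPartial, iteratedFDeriv_two_apply]
        simp
      rw [hsp]; exact hM2 _ (hmem t ht) i j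
    calc |∑ i, ∑ j, v i * v j *
            (fderiv ℝ (fderiv ℝ f) (x + t • v) (Pi.single i 1) (Pi.single j 1))|
        ≤ ∑ i, ∑ j, |v i * v j *
            (fderiv ℝ (fderiv ℝ f) (x + t • v) (Pi.single i 1) (Pi.single j 1))| := by
          refine le_trans (Finset.abs_sum_le_sum_abs _ _) ?_
          exact Finset.sum_le_sum fun i _ => Finset.abs_sum_le_sum_abs _ _
      _ ≤ ∑ i, ∑ j, |v i| * |v j| * M :=
          Finset.sum_le_sum fun i _ => Finset.sum_le_sum fun j _ => hone i j
      _ = M * (∑ i, |v i|)^2 := by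
          rw [sq, Finset.sum_mul_sum]
          rw [Finset.mul_sum]
          exact Finset.sum_congr rfl fun i _ => by
            rw [Finset.mul_sum]
            exact Finset.sum_congr rfl fun j _ => by ring
  have hq := quad_bound hg1 hg2 hbound
  have hgval1 : g 1 = f y := by
    have : x + (1:ℝ) • v = y := by funext j; simp [hv]
    simp only [hg]; rw [this]
  have hgval0 : g 0 = f x := by simp [hg]
  have hder0 : deriv g 0 = fderiv ℝ f x (y - x) := by
    rw [hdg]; simp [hv]
  rw [hgval1, hgval0, hder0] at hq
  simpa [hv] using hq

theorem bernstein_C2_approx (d n : ℕ) (hd : 1 ≤ d) (hn : 1 ≤ n)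
    (f : (Fin d → ℝ) → ℝ) (hf : ContDiff ℝ 2 f) (M : ℝ)
    (hM0 : ∀ x : Fin d → ℝ, (∀ j, x j ∈ Set.Icc (0 : ℝ) 1) → |f x| ≤ M)
    (hM2 : ∀ x : Fin d → ℝ, (∀ j, x j ∈ Set.Icc (0 : ℝ) 1) →
      ∀ i j : Fin d, |secondPartial d f i j x| ≤ M)
    (x : Fin d → ℝ) (hx : ∀ j, x j ∈ Set.Icc (0 : ℝ) 1) :
    |f x - bernOp d n f x| ≤ (d : ℝ) ^ 2 * M / (4 * n) := by
  classical
  have hM : 0 ≤ M := le_trans (abs_nonneg _) (hM0 x hx)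
  have hnR : (0:ℝ) < n := by exact_mod_cast Nat.lt_of_lt_of_le Nat.zero_lt_one hn
  set y : (Fin d → Fin (n+1)) → (Fin d → ℝ) := fun k j => ((k j : ℕ) : ℝ)/n with hy_def
  have hy : ∀ k, ∀ j, y k j ∈ Set.Icc (0:ℝ) 1 := by
    intro k j
    constructor
    · positivity
    · rw [div_le_one hnR]; exact_mod_cast Fin.is_le (k j)
  have hprodpos : ∀ k : Fin d → Fin (n+1), 0 ≤ ∏ j, bern n (k j) (x j) :=
    fun k => Finset.prod_nonneg fun j _ => bern_nonneg (hx j)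
  have hsplit : f x - bernOp d n f x
      = ∑ k : Fin d → Fin (n+1), (f x - f (y k)) * ∏ j, bern n (k j) (x j) := by
    have h1 : bernOp d n f x
        = ∑ k : Fin d → Fin (n+1), f (y k) * ∏ j, bern n (k j) (x j) := rfl
    have hw1 : ∑ k : Fin d → Fin (n+1), ∏ j, bern n (k j) (x j) = 1 := by
      rw [sum_prod_eq (fun j t => bern n t (x j))]
      exact Finset.prod_eq_one fun j _ => bern_sum n (x j)
    rw [h1, Finset.sum_congr rfl (fun k _ => sub_mul (f x) (f (y k)) _),
      Finset.sum_sub_distrib, ← Finset.mul_sum, hw1, mul_one]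
  set D := fderiv ℝ f x with hD
  have hterm : ∀ k : Fin d → Fin (n+1), (f x - f (y k)) * ∏ j, bern n (k j) (x j)
      = -(D (y k - x) * ∏ j, bern n (k j) (x j))
        - (f (y k) - f x - D (y k - x)) * ∏ j, bern n (k j) (x j) := fun k => by ring
  have hlin : ∑ k : Fin d → Fin (n+1), D (y k - x) * ∏ j, bern n (k j) (x j) = 0 := by
    have hDex : ∀ k : Fin d → Fin (n+1),
        D (y k - x) = ∑ i, (y k i - x i) * D (Pi.single i 1) := by
      intro k
      rw [lin_expand D (y k - x)]
      exact Finset.sum_congr rfl fun i _ => by rw [Pi.sub_apply]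
    calc ∑ k : Fin d → Fin (n+1), D (y k - x) * ∏ j, bern n (k j) (x j)
        = ∑ k : Fin d → Fin (n+1), ∑ i,
            ((y k i - x i) * D (Pi.single i 1)) * ∏ j, bern n (k j) (x j) :=
          Finset.sum_congr rfl fun k _ => by rw [hDex k, Finset.sum_mul]
      _ = ∑ i, ∑ k : Fin d → Fin (n+1),
            ((y k i - x i) * D (Pi.single i 1)) * ∏ j, bern n (k j) (x j) := Finset.sum_comm
      _ = ∑ i, (∑ k : Fin d → Fin (n+1), (y k i - x i) * ∏ j, bern n (k j) (x j))
            * D (Pi.single i 1) := by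
          refine Finset.sum_congr rfl fun i _ => ?_
          rw [Finset.sum_mul]
          exact Finset.sum_congr rfl fun k _ => by ring
      _ = 0 := by
          refine Finset.sum_eq_zero fun i _ => ?_
          have h0 : ∑ k : Fin d → Fin (n+1),
              (((k i : ℕ):ℝ)/n - x i) * ∏ j, bern n (k j) (x j) = 0 := by
            rw [weighted_sum x i (fun t => ((t:ℕ):ℝ)/n - x i)]
            exact bern_center hn (x i)
          have h0' : ∑ k : Fin d → Fin (n+1),
              (y k i - x i) * ∏ j, bern n (k j) (x j) = 0 := h0
          rw [h0', zero_mul]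
  have hvar : ∀ i, ∑ k : Fin d → Fin (n+1),
      (y k i - x i)^2 * ∏ j, bern n (k j) (x j) ≤ 1/(4*n) := by
    intro i
    have h0 : ∑ k : Fin d → Fin (n+1),
        ((((k i):ℕ):ℝ)/n - x i)^2 * ∏ j, bern n (k j) (x j) = x i * (1 - x i) / n := by
      rw [weighted_sum x i (fun t => (((t:ℕ):ℝ)/n - x i)^2)]
      exact bern_var hn (x i)
    have h0' : ∑ k : Fin d → Fin (n+1),
        (y k i - x i)^2 * ∏ j, bern n (k j) (x j) = x i * (1 - x i) / n := h0
    rw [h0', div_le_div_iff₀ hnR (by positivity)]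
    have hxi := hx i
    have hq : x i * (1 - x i) ≤ 1/4 := by nlinarith [sq_nonneg (x i - 1/2)]
    nlinarith [mul_le_mul_of_nonneg_right hq (show (0:ℝ) ≤ 4*n by positivity)]
  have hkey : ∀ k : Fin d → Fin (n+1), |f (y k) - f x - D (y k - x)|
      ≤ M * ((d:ℝ) * ∑ i, (y k i - x i)^2) := by
    intro k
    refine le_trans (taylor_bound hf hM2 hx (hy k)) ?_
    refine mul_le_mul_of_nonneg_left ?_ hM
    have h2 := sq_sum_le_card_mul_sum_sq (s := (univ : Finset (Fin d)))
      (f := fun i => |y k i - x i|)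
    simpa [sq_abs] using h2
  calc |f x - bernOp d n f x|
      = |∑ k : Fin d → Fin (n+1), (-(D (y k - x) * ∏ j, bern n (k j) (x j))
          - (f (y k) - f x - D (y k - x)) * ∏ j, bern n (k j) (x j))| := by
        rw [hsplit]
        congr 1
        exact Finset.sum_congr rfl fun k _ => hterm k
    _ = |∑ k : Fin d → Fin (n+1),
          (f (y k) - f x - D (y k - x)) * ∏ j, bern n (k j) (x j)| := by
        rw [Finset.sum_sub_distrib, Finset.sum_neg_distrib, hlin, neg_zero, zero_sub, abs_neg]
    _ ≤ ∑ k : Fin d → Fin (n+1),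
          |f (y k) - f x - D (y k - x)| * ∏ j, bern n (k j) (x j) := by
        refine le_trans (Finset.abs_sum_le_sum_abs _ _) (le_of_eq ?_)
        exact Finset.sum_congr rfl fun k _ => by
          rw [abs_mul, abs_of_nonneg (hprodpos k)]
    _ ≤ ∑ k : Fin d → Fin (n+1),
          (M * ((d:ℝ) * ∑ i, (y k i - x i)^2)) * ∏ j, bern n (k j) (x j) :=
        Finset.sum_le_sum fun k _ => mul_le_mul_of_nonneg_right (hkey k) (hprodpos k)
    _ = M * (d:ℝ) * ∑ i, ∑ k : Fin d → Fin (n+1),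
          (y k i - x i)^2 * ∏ j, bern n (k j) (x j) := by
        rw [Finset.sum_congr rfl (fun k (_ : k ∈ univ) => show
          (M * ((d:ℝ) * ∑ i, (y k i - x i)^2)) * ∏ j, bern n (k j) (x j)
            = ∑ i, (M * (d:ℝ)) * ((y k i - x i)^2 * ∏ j, bern n (k j) (x j)) from by
          rw [show (M * ((d:ℝ) * ∑ i, (y k i - x i)^2)) * ∏ j, bern n (k j) (x j)
              = (M * (d:ℝ)) * ((∑ i, (y k i - x i)^2) * ∏ j, bern n (k j) (x j)) from by ring,
            Finset.sum_mul, Finset.mul_sum])]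
        rw [Finset.sum_comm]
        simp only [← Finset.mul_sum]
    _ ≤ M * (d:ℝ) * ∑ _i : Fin d, 1/(4*(n:ℝ)) :=
        mul_le_mul_of_nonneg_left (Finset.sum_le_sum fun i _ => hvar i) (by positivity)
    _ = (d : ℝ) ^ 2 * M / (4 * n) := by
        rw [Finset.sum_const, card_univ, Fintype.card_fin, nsmul_eq_mul]
        field_simp
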